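/- Let p, q be coprime integers with 2 ≤ p < q. The 2×2 matrix (8/(pq))·sin²(qπ/p)·sin²(pπ/q)·[[−1, (−1)^{p+q}], [(−1)^{p+q}, (−1)^{pq+1}]] is invertible if and only if both p and q are odd. -/

import Mathlib

open Real Matrix

theorem stmt_15 (p q : ℕ) (hcop : Nat.Coprime p q) (hp : 2 ≤ p) (hpq : p < q) :
    IsUnit ((8 / ((p : ℝ) * q) * Real.sin ((q : ℝ) * Real.pi / p) ^ 2 *
        Real.sin ((p : ℝ) * Real.pi / q) ^ 2) •
      !![(-1 : ℝ), (-1 : ℝ) ^ (p + q); (-1 : ℝ) ^ (p + q), (-1 : ℝ) ^ (p * q + 1)])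
    ↔ (Odd p ∧ Odd q) := by
  have hpn : 0 < p := lt_of_lt_of_le (by norm_num) hp
  have hqn : 0 < q := lt_trans hpn hpq
  have hp0 : (0:ℝ) < p := by exact_mod_cast hpn
  have hq0 : (0:ℝ) < q := by exact_mod_cast hqn
  have hs1 : Real.sin ((q : ℝ) * Real.pi / p) ≠ 0 := by
    intro h
    rw [Real.sin_eq_zero_iff] at h
    obtain ⟨n, hn⟩ := h
    field_simp at hn
    have hn' : (n : ℝ) * p = q :=
      mul_right_cancel₀ Real.pi_ne_zero (by linear_combination Real.pi * hn)
    have hdvd : p ∣ q := Int.ofNat_dvd.mp ⟨n, by exact_mod_cast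
      (by linear_combination -hn' : (q:ℝ) = p * n)⟩
    have := Nat.Coprime.eq_one_of_dvd hcop hdvd
    omega
  have hs2 : Real.sin ((p : ℝ) * Real.pi / q) ≠ 0 := by
    intro h
    rw [Real.sin_eq_zero_iff] at h
    obtain ⟨n, hn⟩ := h
    field_simp at hn
    have hn' : (n : ℝ) * q = p :=
      mul_right_cancel₀ Real.pi_ne_zero (by linear_combination Real.pi * hn)
    have hdvd : q ∣ p := Int.ofNat_dvd.mp ⟨n, by exact_mod_cast
      (by linear_combination -hn' : (p:ℝ) = q * n)⟩
    have := Nat.le_of_dvd hpn hdvd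
    omega
  have hc : (8 / ((p : ℝ) * q) * Real.sin ((q : ℝ) * Real.pi / p) ^ 2 *
      Real.sin ((p : ℝ) * Real.pi / q) ^ 2) ≠ 0 := by
    apply mul_ne_zero (mul_ne_zero ?_ (pow_ne_zero _ hs1)) (pow_ne_zero _ hs2)
    positivity
  rw [Matrix.isUnit_iff_isUnit_det, Matrix.det_smul, Matrix.det_fin_two_of,
    isUnit_iff_ne_zero]
  have hdet : (-1 : ℝ) * (-1) ^ (p * q + 1) - (-1 : ℝ) ^ (p + q) * (-1) ^ (p + q)
      = (-1 : ℝ) ^ (p * q) - 1 := by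
    rw [← pow_add, ← two_mul, pow_mul, neg_one_sq, one_pow, pow_succ]
    ring
  rw [hdet, ← Nat.odd_mul]
  rcases Nat.even_or_odd (p * q) with he | ho
  · simp [he.neg_one_pow, Nat.not_odd_iff_even.mpr he]
  · simp only [ho.neg_one_pow, ho, iff_true]
    exact mul_ne_zero (pow_ne_zero _ hc) (by norm_num)
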